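/- The ∀R case (Δ₁ side) of the interpolation construction: suppose ∀x. A[x] ∈ Δ₁, a is a variable not free in Γ₁ ∪ Γ₂ ∪ Δ₁ ∪ Δ₂, and C'[a] interpolates the premise, i.e., Γ₁ ⊢ Δ₁, A[a], C'[a] and C'[a], Γ₂ ⊢ Δ₂ are derivable. Then ∃x. C'[x] interpolates the conclusion: Γ₁ ⊢ Δ₁, ∃x. C'[x] and ∃x. C'[x], Γ₂ ⊢ Δ₂ are derivable. -/

import Mathlib

namespace Craig

abbrev var : Type := Nat
abbrev tm : Type := var
abbrev pred : Type := Nat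

inductive form : Type
  | P : pred → List tm → form
  | Bot : form
  | Top : form
  | And : form → form → form
  | Or : form → form → form
  | Not : form → form
  | FAll : form → form
  | FEx : form → form
  deriving DecidableEq

def liftSub (s : var → tm) : var → tm
  | 0 => 0
  | n + 1 => (s n) + 1

def fsubst (s : var → tm) : form → form
  | .P i tms => .P i (tms.map s)
  | .Bot => .Bot
  | .Top => .Top
  | .And A B => .And (fsubst s A) (fsubst s B)
  | .Or A B => .Or (fsubst s A) (fsubst s B)
  | .Not A => .Not (fsubst s A)
  | .FAll A => .FAll (fsubst (liftSub s) A)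
  | .FEx A => .FEx (fsubst (liftSub s) A)

def preSuc : List Nat → List Nat
  | [] => []
  | 0 :: l => preSuc l
  | (n + 1) :: l => n :: preSuc l

def fv : form → List var
  | .P _ tms => tms
  | .Bot => []
  | .Top => []
  | .And A B => fv A ++ fv B
  | .Or A B => fv A ++ fv B
  | .Not A => fv A
  | .FAll A => preSuc (fv A)
  | .FEx A => preSuc (fv A)

def posneg : form → Set pred × Set pred
  | .P i _ => ({i}, ∅)
  | .Bot => (∅, ∅)
  | .Top => (∅, ∅)
  | .And A B => ((posneg A).1 ∪ (posneg B).1, (posneg A).2 ∪ (posneg B).2)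
  | .Or A B => ((posneg A).1 ∪ (posneg B).1, (posneg A).2 ∪ (posneg B).2)
  | .Not A => ((posneg A).2, (posneg A).1)
  | .FAll A => posneg A
  | .FEx A => posneg A

def pos (A : form) : Set pred := (posneg A).1
def neg (A : form) : Set pred := (posneg A).2

def fAll (a : var) (A : form) : form :=
  .FAll (fsubst (fun v => if v = a then 0 else v + 1) A)
def fEx (a : var) (A : form) : form :=
  .FEx (fsubst (fun v => if v = a then 0 else v + 1) A)

def FAll_inst (t : tm) : form → form
  | .FAll A => fsubst (fun v => match v with | 0 => t | n + 1 => n) A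
  | A => A

def FEx_inst (t : tm) : form → form
  | .FEx A => fsubst (fun v => match v with | 0 => t | n + 1 => n) A
  | A => A

abbrev Seq : Type := Set form × Set form

def fvs (S : Set form) : Set var := ⋃ A ∈ S, {v | v ∈ fv A}

inductive Deriv : Type
  | Init : Seq → Deriv
  | BotL : Seq → Deriv
  | TopR : Seq → Deriv
  | AndL : Seq → Deriv → Deriv
  | AndR : Seq → Deriv → Deriv → Deriv
  | OrL : Seq → Deriv → Deriv → Deriv
  | OrR : Seq → Deriv → Deriv
  | NotL : Seq → Deriv → Deriv
  | NotR : Seq → Deriv → Deriv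
  | AllL : Seq → Deriv → Deriv
  | AllR : Seq → Deriv → Deriv
  | ExL : Seq → Deriv → Deriv
  | ExR : Seq → Deriv → Deriv
  | WL : Seq → Deriv → Deriv
  | WR : Seq → Deriv → Deriv

def root : Deriv → Seq
  | .Init s => s
  | .BotL s => s
  | .TopR s => s
  | .AndL s _ => s
  | .AndR s _ _ => s
  | .OrL s _ _ => s
  | .OrR s _ => s
  | .NotL s _ => s
  | .NotR s _ => s
  | .AllL s _ => s
  | .AllR s _ => s
  | .ExL s _ => s
  | .ExR s _ => s
  | .WL s _ => s
  | .WR s _ => s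

def is_deriv : Deriv → Prop
  | .Init s => s.1.Finite ∧ s.2.Finite ∧ ∃ A, A ∈ s.1 ∧ A ∈ s.2
  | .BotL s => s.1.Finite ∧ s.2.Finite ∧ form.Bot ∈ s.1
  | .TopR s => s.1.Finite ∧ s.2.Finite ∧ form.Top ∈ s.2
  | .AndL s d => s.1.Finite ∧ s.2.Finite ∧
      ∃ A B, form.And A B ∈ s.1 ∧ is_deriv d ∧ root d = ({A, B} ∪ s.1, s.2)
  | .AndR s dl dr => s.1.Finite ∧ s.2.Finite ∧
      ∃ A B, form.And A B ∈ s.2 ∧ is_deriv dl ∧ root dl = (s.1, s.2 ∪ {A}) ∧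
        is_deriv dr ∧ root dr = (s.1, s.2 ∪ {B})
  | .OrL s dl dr => s.1.Finite ∧ s.2.Finite ∧
      ∃ A B, form.Or A B ∈ s.1 ∧ is_deriv dl ∧ root dl = ({A} ∪ s.1, s.2) ∧
        is_deriv dr ∧ root dr = ({B} ∪ s.1, s.2)
  | .OrR s d => s.1.Finite ∧ s.2.Finite ∧
      ∃ A B, form.Or A B ∈ s.2 ∧ is_deriv d ∧ root d = (s.1, s.2 ∪ {A, B})
  | .NotL s d => s.1.Finite ∧ s.2.Finite ∧
      ∃ C, form.Not C ∈ s.1 ∧ is_deriv d ∧ root d = (s.1, s.2 ∪ {C})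
  | .NotR s d => s.1.Finite ∧ s.2.Finite ∧
      ∃ C, form.Not C ∈ s.2 ∧ is_deriv d ∧ root d = ({C} ∪ s.1, s.2)
  | .AllL s d => s.1.Finite ∧ s.2.Finite ∧
      ∃ A a t, fAll a A ∈ s.1 ∧ is_deriv d ∧
        root d = ({FAll_inst t (fAll a A)} ∪ s.1, s.2)
  | .AllR s d => s.1.Finite ∧ s.2.Finite ∧
      ∃ a A, fAll a A ∈ s.2 ∧ a ∉ fvs (s.1 ∪ s.2) ∧ is_deriv d ∧
        root d = (s.1, s.2 ∪ {A})
  | .ExL s d => s.1.Finite ∧ s.2.Finite ∧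
      ∃ a A, fEx a A ∈ s.1 ∧ a ∉ fvs (s.1 ∪ s.2) ∧ is_deriv d ∧
        root d = ({A} ∪ s.1, s.2)
  | .ExR s d => s.1.Finite ∧ s.2.Finite ∧
      ∃ A a t, fEx a A ∈ s.2 ∧ is_deriv d ∧
        root d = (s.1, s.2 ∪ {FEx_inst t (fEx a A)})
  | .WL s d => ∃ Γ Δ A, Γ.Finite ∧ Δ.Finite ∧ is_deriv d ∧ root d = (Γ, Δ) ∧
      s = ({A} ∪ Γ, Δ)
  | .WR s d => ∃ Γ Δ A, Γ.Finite ∧ Δ.Finite ∧ is_deriv d ∧ root d = (Γ, Δ) ∧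
      s = (Γ, Δ ∪ {A})


lemma liftSub_comp (σ τ : var → tm) : liftSub (σ ∘ τ) = liftSub σ ∘ liftSub τ := by
  funext v; cases v <;> simp [liftSub]

lemma fsubst_comp (σ τ : var → tm) (A : form) :
    fsubst σ (fsubst τ A) = fsubst (σ ∘ τ) A := by
  induction A generalizing σ τ <;> simp [fsubst, liftSub_comp, List.map_map, *]

lemma liftSub_id : liftSub (fun v => v) = fun v => v := by
  funext v; cases v <;> simp [liftSub]

lemma fsubst_id (A : form) : fsubst (fun v => v) A = A := by
  induction A <;> simp [fsubst, liftSub_id, *]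

lemma FEx_inst_fEx (a : var) (C : form) : FEx_inst a (fEx a C) = C := by
  simp only [fEx, FEx_inst, fsubst_comp]
  have h : ((fun v => match v with | 0 => a | n+1 => n) ∘
      (fun v : var => if v = a then 0 else v + 1)) = fun v => v := by
    funext v; by_cases h : v = a <;> simp [h]
  rw [h, fsubst_id]

lemma preSuc_map_liftSub (σ : var → tm) (l : List var) :
    preSuc (l.map (liftSub σ)) = (preSuc l).map σ := by
  induction l with
  | nil => rfl
  | cons v l ih => cases v <;> simp [liftSub, preSuc, ih]

lemma fv_fsubst (σ : var → tm) (A : form) : fv (fsubst σ A) = (fv A).map σ := by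
  induction A generalizing σ <;> simp [fv, fsubst, preSuc_map_liftSub, *]

lemma mem_preSuc_map (a : var) (l : List var) (x : var)
    (hx : x ∈ preSuc (l.map (fun v => if v = a then 0 else v + 1))) : x ∈ l ∧ x ≠ a := by
  induction l with
  | nil => simp [preSuc] at hx
  | cons v l ih =>
    by_cases h : v = a
    · simp [h, preSuc] at hx
      have := ih hx
      exact ⟨List.mem_cons_of_mem _ this.1, this.2⟩
    · simp [h, preSuc] at hx
      rcases hx with rfl | hx
      · exact ⟨List.mem_cons_self, h⟩
      · have := ih hx
        exact ⟨List.mem_cons_of_mem _ this.1, this.2⟩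

lemma not_mem_fv_fEx (a : var) (C : form) : a ∉ fv (fEx a C) := by
  simp only [fEx, fv, fv_fsubst]
  intro h
  exact (mem_preSuc_map a _ a h).2 rfl

lemma mem_fvs {S : Set form} {v : var} : v ∈ fvs S ↔ ∃ A ∈ S, v ∈ fv A := by
  simp [fvs]

lemma root_finite (d : Deriv) (h : is_deriv d) : (root d).1.Finite ∧ (root d).2.Finite := by
  cases d with
  | WL s d =>
    obtain ⟨Γ, Δ, B, hΓ, hΔ, _, _, hs⟩ := h
    rw [root, hs]
    exact ⟨(Set.finite_singleton B).union hΓ, hΔ⟩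
  | WR s d =>
    obtain ⟨Γ, Δ, B, hΓ, hΔ, _, _, hs⟩ := h
    rw [root, hs]
    exact ⟨hΓ, hΔ.union (Set.finite_singleton B)⟩
  | _ => first
    | exact ⟨h.1, h.2.1⟩

def derivable (s : Seq) : Prop := ∃ d, is_deriv d ∧ root d = s

theorem allR_interpolation_case (Γ₁ Γ₂ Δ₁ Δ₂ : Set form) (a : var) (A C' : form)
    (hmem : fAll a A ∈ Δ₁)
    (ha : a ∉ fvs (Γ₁ ∪ Γ₂ ∪ Δ₁ ∪ Δ₂))
    (h1 : derivable (Γ₁, Δ₁ ∪ {A, C'}))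
    (h2 : derivable ({C'} ∪ Γ₂, Δ₂)) :
    derivable (Γ₁, Δ₁ ∪ {fEx a C'}) ∧
    derivable ({fEx a C'} ∪ Γ₂, Δ₂) := by
  obtain ⟨d1, hd1, hr1⟩ := h1
  obtain ⟨d2, hd2, hr2⟩ := h2
  have hf1 := root_finite d1 hd1
  rw [hr1] at hf1
  have hf2 := root_finite d2 hd2
  rw [hr2] at hf2
  have hΓ₁ : Γ₁.Finite := hf1.1
  have hΔ₁ : Δ₁.Finite := hf1.2.subset Set.subset_union_left
  have hΓ₂ : Γ₂.Finite := hf2.1.subset Set.subset_union_right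
  have hΔ₂ : Δ₂.Finite := hf2.2
  have ha' : ∀ B, B ∈ Γ₁ ∪ Γ₂ ∪ Δ₁ ∪ Δ₂ → a ∉ fv B := by
    intro B hB hfv
    exact ha (mem_fvs.mpr ⟨B, hB, hfv⟩)
  constructor
  · -- part 1
    set s1 : Seq := (Γ₁, Δ₁ ∪ {A} ∪ {fEx a C'}) with hs1
    refine ⟨Deriv.AllR (Γ₁, Δ₁ ∪ {fEx a C'}) (Deriv.ExR s1
      (Deriv.WR (Γ₁, (Δ₁ ∪ {A, C'}) ∪ {fEx a C'}) d1)), ?_, rfl⟩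
    refine ⟨hΓ₁, (hΔ₁.union (Set.finite_singleton _)), a, A, Or.inl hmem, ?_, ?_, ?_⟩
    · intro h
      obtain ⟨B, hB, hfv⟩ := mem_fvs.mp h
      rcases hB with hB | (hB | hB)
      · exact ha' B (Or.inl (Or.inl (Or.inl hB))) hfv
      · exact ha' B (Or.inl (Or.inr hB)) hfv
      · rw [Set.mem_singleton_iff] at hB; subst hB; exact not_mem_fv_fEx a C' hfv
    · refine ⟨hΓ₁, ((hΔ₁.union (Set.finite_singleton A)).union (Set.finite_singleton _)),
        C', a, a, Or.inr rfl, ?_, ?_⟩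
      · refine ⟨Γ₁, Δ₁ ∪ {A, C'}, fEx a C', hΓ₁,
          hΔ₁.union ((Set.finite_singleton C').insert A), hd1, hr1, rfl⟩
      · simp only [root, FEx_inst_fEx, hs1]
        refine Prod.ext rfl ?_
        ext x
        simp only [Set.mem_union, Set.mem_insert_iff, Set.mem_singleton_iff]
        tauto
    · simp only [root, hs1]
      refine Prod.ext rfl ?_
      ext x
      simp only [Set.mem_union, Set.mem_singleton_iff]
      tauto
  · -- part 2
    refine ⟨Deriv.ExL ({fEx a C'} ∪ Γ₂, Δ₂)
      (Deriv.WL ({fEx a C'} ∪ ({C'} ∪ Γ₂), Δ₂) d2), ?_, rfl⟩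
    refine ⟨(Set.finite_singleton _).union hΓ₂, hΔ₂, a, C', Or.inl rfl, ?_, ?_, ?_⟩
    · intro h
      obtain ⟨B, hB, hfv⟩ := mem_fvs.mp h
      rcases hB with (hB | hB) | hB
      · rw [Set.mem_singleton_iff] at hB; subst hB; exact not_mem_fv_fEx a C' hfv
      · exact ha' B (Or.inl (Or.inl (Or.inr hB))) hfv
      · exact ha' B (Or.inr hB) hfv
    · exact ⟨{C'} ∪ Γ₂, Δ₂, fEx a C', (Set.finite_singleton _).union hΓ₂, hΔ₂, hd2, hr2, rfl⟩
    · simp only [root]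
      refine Prod.ext ?_ rfl
      ext x
      simp only [Set.mem_union, Set.mem_singleton_iff]
      tauto


end Craig
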